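/- Let A = K[x,y]/I with I = (x^k y^m : m > a or k + m > a + b) the monomial algebra A_{a,b} for the Hirzebruch surface Σ_1, and let δ_1 = ∂_x + x∂_y, δ_2 = ∂_y act on A. Then δ_2^{a+1} = 0, and δ_1^{l_1} δ_2^{l_2} = 0 whenever l_1 + 2 l_2 > a + b. -/

import Mathlib

open MvPolynomial

/-- Span of classes of "good" monomials `x^k y^m` (with `m ≤ a`, `k+m ≤ b`) whose weight
`c1*k + c2*m` is `< w`. -/
noncomputable def genS (K : Type*) [Field K] (a b : ℕ) (I : Ideal (MvPolynomial (Fin 2) K)) (c1 c2 w : ℕ) :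
    Submodule K (MvPolynomial (Fin 2) K ⧸ I) :=
  Submodule.span K {v | ∃ k m : ℕ, m ≤ a ∧ k + m ≤ b ∧ c1 * k + c2 * m < w ∧
    v = Ideal.Quotient.mk I (X 0 ^ k * X 1 ^ m)}

lemma genS_zero (K : Type*) [Field K] (a b : ℕ) (I : Ideal (MvPolynomial (Fin 2) K))
    (c1 c2 : ℕ) : genS K a b I c1 c2 0 = ⊥ := by
  rw [eq_bot_iff, genS, Submodule.span_le]
  rintro v ⟨k, m, -, -, h, -⟩
  exact absurd h (Nat.not_lt_zero _)

lemma genS_iter (K : Type*) [Field K] (a b : ℕ) (I : Ideal (MvPolynomial (Fin 2) K))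
    (c1 c2 d : ℕ) (D : Module.End K (MvPolynomial (Fin 2) K ⧸ I))
    (hD : ∀ w, Submodule.map D (genS K a b I c1 c2 w) ≤ genS K a b I c1 c2 (w - d)) :
    ∀ l w, Submodule.map (D ^ l) (genS K a b I c1 c2 w) ≤ genS K a b I c1 c2 (w - d * l) := by
  intro l
  induction l with
  | zero =>
      intro w
      rw [pow_zero, Nat.mul_zero, Nat.sub_zero]
      rintro x ⟨y, hy, rfl⟩
      simpa using hy
  | succ l ih =>
      intro w
      have : Submodule.map (D ^ (l + 1)) (genS K a b I c1 c2 w)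
          = Submodule.map (D ^ l) (Submodule.map D (genS K a b I c1 c2 w)) := by
        rw [pow_succ, ← Submodule.map_comp]; rfl
      rw [this]
      refine le_trans (Submodule.map_mono (hD w)) (le_trans (ih (w - d)) ?_)
      rw [Nat.mul_succ, Nat.sub_sub, Nat.add_comm]

lemma genS_top (K : Type*) [Field K] (a b : ℕ) (c1 c2 w : ℕ)
    (I : Ideal (MvPolynomial (Fin 2) K))
    (hI : I = Ideal.span {p | ∃ k m : ℕ, (a < m ∨ b < k + m) ∧ p = X 0 ^ k * X 1 ^ m})
    (hw : ∀ k m : ℕ, m ≤ a → k + m ≤ b → c1 * k + c2 * m < w) :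
    (⊤ : Submodule K (MvPolynomial (Fin 2) K ⧸ I)) ≤ genS K a b I c1 c2 w := by
  suffices h : ∀ p : MvPolynomial (Fin 2) K,
      Ideal.Quotient.mk I p ∈ genS K a b I c1 c2 w by
    intro q _
    obtain ⟨p, rfl⟩ := Ideal.Quotient.mk_surjective q
    exact h p
  intro p
  induction p using MvPolynomial.induction_on' with
  | add p q hp hq => rw [(Ideal.Quotient.mk I).map_add]; exact add_mem hp hq
  | monomial u c =>
      have hmon : (monomial u c : MvPolynomial (Fin 2) K) = C c * (X 0 ^ u 0 * X 1 ^ u 1) := by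
        rw [monomial_eq, Finsupp.prod_fintype _ _ (fun i => pow_zero _), Fin.prod_univ_two]
      have hsmul : Ideal.Quotient.mk I (monomial u c)
          = c • Ideal.Quotient.mk I (X 0 ^ u 0 * X 1 ^ u 1) := by
        rw [hmon, ← smul_eq_C_mul]
        exact map_smul (Ideal.Quotient.mkₐ K I) c _
      rw [hsmul]
      by_cases hgood : u 1 ≤ a ∧ u 0 + u 1 ≤ b
      · exact Submodule.smul_mem _ _ (Submodule.subset_span
          ⟨u 0, u 1, hgood.1, hgood.2, hw _ _ hgood.1 hgood.2, rfl⟩)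
      · have hmem : (X 0 ^ u 0 * X 1 ^ u 1 : MvPolynomial (Fin 2) K) ∈ I := by
          rw [hI]
          exact Ideal.subset_span ⟨u 0, u 1, by omega, rfl⟩
        rw [Ideal.Quotient.eq_zero_iff_mem.mpr hmem, smul_zero]
        exact zero_mem _

set_option maxHeartbeats 1000000 in
/-- On `A_{a,b} = K[x,y]/(x^k y^m : m > a ∨ k + m > b)`, the operators `δ_1 = ∂_x + x∂_y` and
`δ_2 = ∂_y` (defined on the monomial basis) satisfy `δ_2^{a+1} = 0` and
`δ_1^{l_1} δ_2^{l_2} = 0` whenever `l_1 + 2l_2 > a + b`. -/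
theorem stmt_10 (K : Type*) [Field K] [CharZero K] (a b : ℕ) (ha : 1 ≤ a) (hb : a < b)
    (I : Ideal (MvPolynomial (Fin 2) K))
    (hI : I = Ideal.span {p | ∃ k m : ℕ, (a < m ∨ b < k + m) ∧ p = X 0 ^ k * X 1 ^ m})
    (D1 D2 : Module.End K (MvPolynomial (Fin 2) K ⧸ I))
    (hD1 : ∀ k m : ℕ, m ≤ a → k + m ≤ b →
      D1 (Ideal.Quotient.mk I (X 0 ^ k * X 1 ^ m)) =
        Ideal.Quotient.mk I (pderiv 0 (X 0 ^ k * X 1 ^ m) + X 0 * pderiv 1 (X 0 ^ k * X 1 ^ m)))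
    (hD2 : ∀ k m : ℕ, m ≤ a → k + m ≤ b →
      D2 (Ideal.Quotient.mk I (X 0 ^ k * X 1 ^ m)) =
        Ideal.Quotient.mk I (pderiv 1 (X 0 ^ k * X 1 ^ m))) :
    D2 ^ (a + 1) = 0 ∧ ∀ l1 l2 : ℕ, a + b < l1 + 2 * l2 → D1 ^ l1 * D2 ^ l2 = 0 := by
  -- explicit formulas on the monomial basis
  have hD2' : ∀ k m : ℕ, m ≤ a → k + m ≤ b →
      D2 (Ideal.Quotient.mk I (X 0 ^ k * X 1 ^ m)) =
        m • Ideal.Quotient.mk I (X 0 ^ k * X 1 ^ (m - 1)) := by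
    intro k m hm hkm
    rw [hD2 k m hm hkm]
    have h : (pderiv 1 (X 0 ^ k * X 1 ^ m) : MvPolynomial (Fin 2) K)
        = (m : MvPolynomial (Fin 2) K) * (X 0 ^ k * X 1 ^ (m - 1)) := by
      simp [pderiv_mul, pderiv_pow]; ring
    rw [h]
    simp [nsmul_eq_mul]
  have hD1' : ∀ k m : ℕ, m ≤ a → k + m ≤ b →
      D1 (Ideal.Quotient.mk I (X 0 ^ k * X 1 ^ m)) =
        k • Ideal.Quotient.mk I (X 0 ^ (k - 1) * X 1 ^ m)
          + m • Ideal.Quotient.mk I (X 0 ^ (k + 1) * X 1 ^ (m - 1)) := by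
    intro k m hm hkm
    rw [hD1 k m hm hkm]
    have h : (pderiv 0 (X 0 ^ k * X 1 ^ m) + X 0 * pderiv 1 (X 0 ^ k * X 1 ^ m)
          : MvPolynomial (Fin 2) K)
        = (k : MvPolynomial (Fin 2) K) * (X 0 ^ (k - 1) * X 1 ^ m)
          + (m : MvPolynomial (Fin 2) K) * (X 0 ^ (k + 1) * X 1 ^ (m - 1)) := by
      rcases Nat.eq_zero_or_pos m with rfl | hm0
      · simp [pderiv_mul, pderiv_pow]
        try ring
      · have : m - 1 + 1 = m := Nat.succ_pred_eq_of_pos hm0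
        simp [pderiv_mul, pderiv_pow]
        rw [← this]
        push_cast
        ring
    rw [h]
    simp [nsmul_eq_mul]
  -- step lemmas
  have step2a : ∀ w, Submodule.map D2 (genS K a b I 0 1 w) ≤ genS K a b I 0 1 (w - 1) := by
    intro w
    rw [genS, Submodule.map_span_le]
    rintro v ⟨k, m, hm, hkm, hw, rfl⟩
    rw [hD2' k m hm hkm]
    cases m with
    | zero => simp
    | succ m' =>
        simp only [Nat.add_sub_cancel]
        refine nsmul_mem ?_ _
        rw [genS]
        exact Submodule.subset_span ⟨k, m', by omega, by omega, by omega, rfl⟩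
  have step2b : ∀ w, Submodule.map D2 (genS K a b I 1 2 w) ≤ genS K a b I 1 2 (w - 2) := by
    intro w
    rw [genS, Submodule.map_span_le]
    rintro v ⟨k, m, hm, hkm, hw, rfl⟩
    rw [hD2' k m hm hkm]
    cases m with
    | zero => simp
    | succ m' =>
        simp only [Nat.add_sub_cancel]
        refine nsmul_mem ?_ _
        rw [genS]
        exact Submodule.subset_span ⟨k, m', by omega, by omega, by omega, rfl⟩
  have step1 : ∀ w, Submodule.map D1 (genS K a b I 1 2 w) ≤ genS K a b I 1 2 (w - 1) := by
    intro w
    rw [genS, Submodule.map_span_le]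
    rintro v ⟨k, m, hm, hkm, hw, rfl⟩
    rw [hD1' k m hm hkm]
    refine add_mem ?_ ?_
    · cases k with
      | zero => simp
      | succ k' =>
          simp only [Nat.add_sub_cancel]
          refine nsmul_mem ?_ _
          rw [genS]
          exact Submodule.subset_span ⟨k', m, by omega, by omega, by omega, rfl⟩
    · cases m with
      | zero => simp
      | succ m' =>
          simp only [Nat.add_sub_cancel]
          refine nsmul_mem ?_ _
          rw [genS]
          exact Submodule.subset_span ⟨k + 1, m', by omega, by omega, by omega, rfl⟩
  constructor
  · refine LinearMap.ext fun q => ?_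
    have hq : q ∈ genS K a b I 0 1 (a + 1) :=
      genS_top K a b 0 1 (a + 1) I hI (fun k m hm hkm => by omega) trivial
    have h1 : (D2 ^ (a + 1)) q ∈ genS K a b I 0 1 ((a + 1) - 1 * (a + 1)) :=
      genS_iter K a b I 0 1 1 D2 step2a (a + 1) (a + 1) (Submodule.mem_map_of_mem hq)
    have hz : (a + 1) - 1 * (a + 1) = 0 := by omega
    rw [hz, genS_zero, Submodule.mem_bot] at h1
    rw [LinearMap.zero_apply]
    exact h1
  · intro l1 l2 hl
    refine LinearMap.ext fun q => ?_
    have hq : q ∈ genS K a b I 1 2 (a + b + 1) :=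
      genS_top K a b 1 2 (a + b + 1) I hI (fun k m hm hkm => by omega) trivial
    have h2 : (D2 ^ l2) q ∈ genS K a b I 1 2 (a + b + 1 - 2 * l2) :=
      genS_iter K a b I 1 2 2 D2 step2b l2 (a + b + 1) (Submodule.mem_map_of_mem hq)
    have h1 : (D1 ^ l1) ((D2 ^ l2) q) ∈ genS K a b I 1 2 (a + b + 1 - 2 * l2 - 1 * l1) :=
      genS_iter K a b I 1 2 1 D1 step1 l1 _ (Submodule.mem_map_of_mem h2)
    have hz : a + b + 1 - 2 * l2 - 1 * l1 = 0 := by omega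
    rw [hz, genS_zero, Submodule.mem_bot] at h1
    rw [Module.End.mul_apply, LinearMap.zero_apply]
    exact h1
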